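/- Let (E, E₊, θ) be a reflection positive Hilbert space and T : E₊ → E₊ a bounded linear operator satisfying ⟨θTv, w⟩ = ⟨θv, Tw⟩ for all v, w ∈ E₊. Then T maps the null space N = {v ∈ E₊ : ⟨θv,v⟩ = 0} into itself, and the induced operator T̂ on the Hilbert completion Ê of E₊/N (with inner product ⟨v̂,ŵ⟩ = ⟨θv,w⟩) is a bounded symmetric operator with ‖T̂‖ ≤ ‖T‖. -/

import Mathlib

local notation "⟪" x ", " y "⟫" => @inner ℂ _ _ x y

/-- Let `(E, E₊, θ)` be a reflection positive Hilbert space and `T : E₊ → E₊` a bounded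
linear operator with `⟨θTv, w⟩ = ⟨θv, Tw⟩` for `v, w ∈ E₊`.  Then `T` maps the null space
`N = {v ∈ E₊ : ⟨θv,v⟩ = 0}` into itself, and the induced operator `T̂` on `Ê` is a bounded
symmetric operator with `‖T̂‖ ≤ ‖T‖` (expressed here as: `‖T̂ q(v)‖² = re⟨θTv,Tv⟩ ≤
‖T‖² · re⟨θv,v⟩ = ‖T‖² ‖q(v)‖²`, together with the symmetry relation on the quotient). -/
theorem statement2
    {E : Type*} [NormedAddCommGroup E] [InnerProductSpace ℂ E] [CompleteSpace E]
    (θ : E ≃ₗᵢ[ℂ] E) (hθinv : ∀ v : E, θ (θ v) = v)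
    (Eplus : Submodule ℂ E) (hclosed : IsClosed (Eplus : Set E))
    (hpos : ∀ v ∈ Eplus, ∃ r : ℝ, 0 ≤ r ∧ ⟪θ v, v⟫ = (r : ℂ))
    (T : Eplus →L[ℂ] Eplus)
    (hsym : ∀ v w : Eplus, ⟪θ ((T v : E)), (w : E)⟫ = ⟪θ (v : E), ((T w : E))⟫) :
    (∀ v : Eplus, ⟪θ (v : E), (v : E)⟫ = (0 : ℂ) →
        ⟪θ ((T v : E)), ((T v : E))⟫ = (0 : ℂ)) ∧
    (∀ v w : Eplus, ⟪θ ((T v : E)), (w : E)⟫ = ⟪θ (v : E), ((T w : E))⟫) ∧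
    (∀ v : Eplus,
        (⟪θ ((T v : E)), ((T v : E))⟫).re ≤ ‖T‖ ^ 2 * (⟪θ (v : E), (v : E)⟫).re) := by
  classical
  set B : Eplus → Eplus → ℂ := fun x y => ⟪θ (x : E), (y : E)⟫ with hBdef
  have hherm : ∀ x y : Eplus, (starRingEnd ℂ) (B y x) = B x y := by
    intro x y
    calc (starRingEnd ℂ) (⟪θ (y : E), (x : E)⟫) = ⟪(x : E), θ (y : E)⟫ :=
          inner_conj_symm _ _
      _ = ⟪θ (x : E), θ (θ (y : E))⟫ := (θ.inner_map_map _ _).symm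
      _ = ⟪θ (x : E), (y : E)⟫ := by rw [hθinv]
  have hreal : ∀ x : Eplus, B x x = ((B x x).re : ℂ) := by
    intro x
    obtain ⟨r, hr, h⟩ := hpos x x.2
    simp [hBdef, h]
  have hnonneg : ∀ x : Eplus, 0 ≤ (B x x).re := by
    intro x
    obtain ⟨r, hr, h⟩ := hpos x x.2
    simp [hBdef, h, hr]
  let core : PreInnerProductSpace.Core ℂ ↥Eplus :=
    { inner := B
      conj_inner_symm := hherm
      re_inner_nonneg := fun x => hnonneg x
      add_left := by
        intro x y z
        simp only [hBdef, Submodule.coe_add, map_add, inner_add_left]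
      smul_left := by
        intro x y r
        simp only [hBdef, Submodule.coe_smul, map_smul, inner_smul_left] }
  have hCS : ∀ x y : Eplus, ‖B x y‖ ^ 2 ≤ (B x x).re * (B y y).re := by
    intro x y
    have h : ‖B x y‖ * ‖B y x‖ ≤ (B x x).re * (B y y).re := by
      have h0 := @InnerProductSpace.Core.inner_mul_inner_self_le ℂ ↥Eplus _ _ _ core x y
      exact h0
    have h2 : ‖B y x‖ = ‖B x y‖ := by
      rw [← hherm x y, RCLike.norm_conj]
    calc ‖B x y‖ ^ 2 = ‖B x y‖ * ‖B y x‖ := by rw [h2]; ring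
      _ ≤ (B x x).re * (B y y).re := h
  -- the key quantitative bound
  have key : ∀ v : Eplus, (B (T v) (T v)).re ≤ ‖T‖ ^ 2 * (B v v).re := by
    intro v
    set a : ℕ → ℝ := fun n => (B ((T ^ n) v) ((T ^ n) v)).re with ha
    have hshift : ∀ (n : ℕ) (x y : Eplus), B ((T ^ n) x) y = B x ((T ^ n) y) := by
      intro n
      induction n with
      | zero => intro x y; simp
      | succ n ih =>
        intro x y
        have e1 : (T ^ (n + 1)) x = (T ^ n) (T x) := by
          rw [pow_succ, ContinuousLinearMap.mul_apply]
        have e2 : (T ^ (n + 1)) y = T ((T ^ n) y) := by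
          rw [pow_succ', ContinuousLinearMap.mul_apply]
        rw [e1, e2, ih (T x) y]
        exact hsym x ((T ^ n) y)
    have hanonneg : ∀ n, 0 ≤ a n := fun n => hnonneg _
    have hconvex : ∀ m k : ℕ, k ≤ m → a m ^ 2 ≤ a (m - k) * a (m + k) := by
      intro m k hk
      have e1 : B ((T ^ (m - k)) v) ((T ^ (m + k)) v) = B ((T ^ m) v) ((T ^ m) v) := by
        have e2 : (T ^ (m + k)) v = (T ^ k) ((T ^ m) v) := by
          rw [add_comm, pow_add, ContinuousLinearMap.mul_apply]
        have e3 : (T ^ k) ((T ^ (m - k)) v) = (T ^ m) v := by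
          rw [← ContinuousLinearMap.mul_apply, ← pow_add, Nat.add_sub_cancel' hk]
        rw [e2, ← hshift k, e3]
      have h1 : a m ≤ ‖B ((T ^ (m - k)) v) ((T ^ (m + k)) v)‖ := by
        rw [e1]
        exact Complex.re_le_norm _
      have h2 : ‖B ((T ^ (m - k)) v) ((T ^ (m + k)) v)‖ ^ 2
          ≤ a (m - k) * a (m + k) := hCS _ _
      calc a m ^ 2 ≤ ‖B ((T ^ (m - k)) v) ((T ^ (m + k)) v)‖ ^ 2 :=
            pow_le_pow_left₀ (hanonneg m) h1 2
        _ ≤ a (m - k) * a (m + k) := h2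
    have hpowbound : ∀ (n : ℕ) (x : Eplus), ‖(T ^ n) x‖ ≤ ‖T‖ ^ n * ‖x‖ := by
      intro n
      induction n with
      | zero => intro x; simp
      | succ n ih =>
        intro x
        have e1 : (T ^ (n + 1)) x = (T ^ n) (T x) := by
          rw [pow_succ, ContinuousLinearMap.mul_apply]
        calc ‖(T ^ (n + 1)) x‖ = ‖(T ^ n) (T x)‖ := by rw [e1]
          _ ≤ ‖T‖ ^ n * ‖T x‖ := ih (T x)
          _ ≤ ‖T‖ ^ n * (‖T‖ * ‖x‖) :=
              mul_le_mul_of_nonneg_left (T.le_opNorm x) (pow_nonneg (norm_nonneg T) n)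
          _ = ‖T‖ ^ (n + 1) * ‖x‖ := by ring
    have hgrow : ∀ n : ℕ, a n ≤ (‖T‖ ^ 2) ^ n * ‖(v : E)‖ ^ 2 := by
      intro n
      set w : Eplus := (T ^ n) v with hw
      have h1 : a n ≤ ‖(w : E)‖ ^ 2 := by
        have h2 : a n ≤ ‖B w w‖ := Complex.re_le_norm _
        have h3 : ‖B w w‖ ≤ ‖θ (w : E)‖ * ‖(w : E)‖ := norm_inner_le_norm _ _
        have h4 : ‖θ (w : E)‖ = ‖(w : E)‖ := θ.norm_map _
        nlinarith [norm_nonneg (w : E)]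
      have h5 : ‖(w : E)‖ ≤ ‖T‖ ^ n * ‖(v : E)‖ := by
        have := hpowbound n v
        exact this
      have h6 : ‖(w : E)‖ ^ 2 ≤ (‖T‖ ^ n * ‖(v : E)‖) ^ 2 :=
        pow_le_pow_left₀ (norm_nonneg _) h5 2
      calc a n ≤ ‖(w : E)‖ ^ 2 := h1
        _ ≤ (‖T‖ ^ n * ‖(v : E)‖) ^ 2 := h6
        _ = (‖T‖ ^ 2) ^ n * ‖(v : E)‖ ^ 2 := by ring
    have hiter : ∀ n : ℕ, a 1 ^ (2 ^ n) ≤ a 0 ^ (2 ^ n - 1) * a (2 ^ n) := by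
      intro n
      induction n with
      | zero => simp
      | succ n ih =>
        have hN1 : 1 ≤ 2 ^ n := Nat.one_le_two_pow
        have step1 : a 1 ^ (2 ^ (n + 1)) = (a 1 ^ (2 ^ n)) ^ 2 := by
          rw [← pow_mul, pow_succ]
        have step2 : (a 1 ^ (2 ^ n)) ^ 2 ≤ (a 0 ^ (2 ^ n - 1) * a (2 ^ n)) ^ 2 :=
          pow_le_pow_left₀ (pow_nonneg (hanonneg 1) _) ih 2
        have step3 : a (2 ^ n) ^ 2 ≤ a 0 * a (2 ^ (n + 1)) := by
          have h := hconvex (2 ^ n) (2 ^ n) le_rfl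
          have e : 2 ^ n + 2 ^ n = 2 ^ (n + 1) := by rw [pow_succ, mul_two]
          rw [Nat.sub_self, e] at h
          exact h
        have step4 : (a 0 ^ (2 ^ n - 1) * a (2 ^ n)) ^ 2
            = a 0 ^ ((2 ^ n - 1) * 2) * a (2 ^ n) ^ 2 := by
          rw [mul_pow, ← pow_mul]
        have step5 : a 0 ^ ((2 ^ n - 1) * 2) * a (2 ^ n) ^ 2
            ≤ a 0 ^ ((2 ^ n - 1) * 2) * (a 0 * a (2 ^ (n + 1))) := by
          exact mul_le_mul_of_nonneg_left step3 (pow_nonneg (hanonneg 0) _)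
        have step6 : a 0 ^ ((2 ^ n - 1) * 2) * (a 0 * a (2 ^ (n + 1)))
            = a 0 ^ (2 ^ (n + 1) - 1) * a (2 ^ (n + 1)) := by
          have e : (2 ^ n - 1) * 2 + 1 = 2 ^ (n + 1) - 1 := by
            have h2 : 2 ^ (n + 1) = 2 * 2 ^ n := by rw [pow_succ]; ring
            omega
          rw [← e, pow_add, pow_one]
          ring
        calc a 1 ^ (2 ^ (n + 1)) = (a 1 ^ (2 ^ n)) ^ 2 := step1
          _ ≤ (a 0 ^ (2 ^ n - 1) * a (2 ^ n)) ^ 2 := step2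
          _ = a 0 ^ ((2 ^ n - 1) * 2) * a (2 ^ n) ^ 2 := step4
          _ ≤ a 0 ^ ((2 ^ n - 1) * 2) * (a 0 * a (2 ^ (n + 1))) := step5
          _ = a 0 ^ (2 ^ (n + 1) - 1) * a (2 ^ (n + 1)) := step6
    have ha1 : a 1 = (B (T v) (T v)).re := by simp [ha, pow_one]
    have ha0 : a 0 = (B v v).re := by simp [ha]
    rw [← ha1, ← ha0]
    by_cases hT : T = 0
    · have : a 1 = 0 := by
        simp [ha, hT, hBdef, pow_one]
      rw [this, hT]
      exact mul_nonneg (by positivity) (hanonneg 0)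
    by_cases h0 : a 0 = 0
    · have h1 : a 1 ^ 2 ≤ a 0 * a 2 := by
        have := hconvex 1 1 le_rfl
        simpa using this
      rw [h0, zero_mul] at h1
      have h2 : a 1 = 0 := by
        have := hanonneg 1
        nlinarith
      rw [h2, h0]
      positivity
    · have h0' : 0 < a 0 := lt_of_le_of_ne (hanonneg 0) (Ne.symm h0)
      have hTn : 0 < ‖T‖ := by
        rcases eq_or_lt_of_le (norm_nonneg T) with h | h
        · exact absurd (by rw [← ContinuousLinearMap.opNorm_zero_iff, ← h]) hT
        · exact h
      by_contra hcon
      push_neg at hcon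
      set c : ℝ := a 1 / (‖T‖ ^ 2 * a 0) with hc
      have hc1 : 1 < c := by
        rw [hc, lt_div_iff₀ (by positivity), one_mul]
        exact hcon
      obtain ⟨m, hm⟩ := pow_unbounded_of_one_lt (‖(v : E)‖ ^ 2 / a 0) hc1
      have hmN : c ^ m ≤ c ^ (2 ^ m) :=
        pow_le_pow_right₀ hc1.le (Nat.lt_two_pow_self (n := m)).le
      have hNbound : c ^ (2 ^ m) ≤ ‖(v : E)‖ ^ 2 / a 0 := by
        set N : ℕ := 2 ^ m with hNdef
        have hN1 : 1 ≤ N := Nat.one_le_two_pow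
        have h1 := hiter m
        have h2 := hgrow N
        rw [← hNdef] at h1
        have hposd : (0 : ℝ) < (‖T‖ ^ 2 * a 0) ^ N := by positivity
        rw [hc, div_pow, div_le_div_iff₀ hposd h0']
        have e1 : a 0 ^ (N - 1) * a 0 = a 0 ^ N := by
          rw [← pow_succ]
          congr 1
          omega
        calc a 1 ^ N * a 0 ≤ (a 0 ^ (N - 1) * a N) * a 0 :=
              mul_le_mul_of_nonneg_right h1 h0'.le
          _ ≤ (a 0 ^ (N - 1) * ((‖T‖ ^ 2) ^ N * ‖(v : E)‖ ^ 2)) * a 0 :=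
              mul_le_mul_of_nonneg_right
                (mul_le_mul_of_nonneg_left h2 (pow_nonneg (hanonneg 0) _)) h0'.le
          _ = (‖T‖ ^ 2) ^ N * (a 0 ^ (N - 1) * a 0) * ‖(v : E)‖ ^ 2 := by ring
          _ = (‖T‖ ^ 2) ^ N * a 0 ^ N * ‖(v : E)‖ ^ 2 := by rw [e1]
          _ = ‖(v : E)‖ ^ 2 * (‖T‖ ^ 2 * a 0) ^ N := by rw [mul_pow]; ring
      exact absurd (hmN.trans hNbound) (not_le.2 hm)
  refine ⟨?_, hsym, fun v => key v⟩
  intro v hv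
  have h0 : (B v v).re = 0 := by
    have h : B v v = 0 := hv
    simp [h]
  have h1 : (B (T v) (T v)).re ≤ 0 := by
    have := key v
    rw [h0, mul_zero] at this
    exact this
  have h2 : (B (T v) (T v)).re = 0 := le_antisymm h1 (hnonneg _)
  have := hreal (T v)
  rw [h2] at this
  simpa using this
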